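/- arXiv:1609.09802 — 6 statements merged into one kernel-verified Lean document; each statement's English description precedes it below -/
import Mathlib

section
/- If B is a torsion-free abelian group and T is a finite abelian group, then Ext¹(B, T) = 0, i.e. every abelian group extension of T by B splits. -/
/-- Every abelian extension `0 → T → E → B → 0` with `B` torsion-free and `T` finite splits,
i.e. `Ext(B, T) = 0`. -/
theorem ext_torsionFree_finite_eq_zero {B T E : Type*} [AddCommGroup B] [AddCommGroup T]
    [AddCommGroup E] [Finite T]
    (hB : ∀ (x : B) (n : ℕ), n ≠ 0 → n • x = 0 → x = 0)
    (ι : T →+ E) (π : E →+ B)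
    (hι : Function.Injective ι) (hπ : Function.Surjective π)
    (hexact : ι.range = π.ker) :
    ∃ s : B →+ E, π.comp s = AddMonoidHom.id B := by
  classical
  -- `B` is torsion-free as a `ℤ`-module
  haveI hnz : NoZeroSMulDivisors ℤ B := by
    constructor
    intro n x h
    rcases eq_or_ne n 0 with rfl | hn
    · exact Or.inl rfl
    · refine Or.inr (hB x n.natAbs (by simpa using hn) ?_)
      have h1 : ((n.natAbs : ℤ)) • x = 0 := by
        rcases Int.natAbs_eq n with h' | h'
        · rw [← h']; exact h
        · have : (-n) • x = 0 := by rw [neg_smul, h, neg_zero]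
          rw [show ((n.natAbs : ℤ)) = -n by omega]; exact this
      simpa [natCast_zsmul] using h1
  -- fibers of π are finite and nonempty
  have hne : ∀ b : B, Nonempty {e : E // π e = b} := by
    intro b; obtain ⟨e, he⟩ := hπ b; exact ⟨⟨e, he⟩⟩
  have hfin : ∀ b : B, Finite {e : E // π e = b} := by
    intro b
    obtain ⟨e₀, he₀⟩ := hπ b
    have hmem : ∀ e : {e : E // π e = b}, ∃ t, ι t = e.1 - e₀ := by
      intro e
      have : e.1 - e₀ ∈ π.ker := by
        simp [AddMonoidHom.mem_ker, e.2, he₀]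
      rw [← hexact] at this
      exact this
    choose f hf using hmem
    have hinj : Function.Injective f := by
      intro a a' haa
      have h1 : a.1 - e₀ = a'.1 - e₀ := by rw [← hf a, ← hf a', haa]
      ext
      have := sub_left_injective h1
      exact this
    exact Finite.of_injective f hinj
  -- endow fibers with the discrete topology
  letI topo : ∀ b : B, TopologicalSpace {e : E // π e = b} := fun _ => ⊥
  haveI disc : ∀ b : B, DiscreteTopology {e : E // π e = b} := fun _ => ⟨rfl⟩
  haveI : ∀ b : B, CompactSpace {e : E // π e = b} := fun b => by
    haveI := hfin b; exact Finite.compactSpace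
  -- the constraint sets
  set X := ∀ b : B, {e : E // π e = b} with hX
  let Z : B × B → Set X := fun p =>
    {x | (x (p.1 + p.2)).1 = (x p.1).1 + (x p.2).1}
  have hZc : ∀ p, IsClosed (Z p) := by
    intro p
    have hcont : Continuous (fun x : X =>
        ((x (p.1 + p.2), x p.1, x p.2) :
          {e : E // π e = p.1 + p.2} × {e : E // π e = p.1} × {e : E // π e = p.2})) := by
      exact (continuous_apply _).prodMk ((continuous_apply _).prodMk (continuous_apply _))
    have : Z p = (fun x : X => ((x (p.1 + p.2), x p.1, x p.2) :
          {e : E // π e = p.1 + p.2} × {e : E // π e = p.1} × {e : E // π e = p.2})) ⁻¹'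
        {q | q.1.1 = q.2.1.1 + q.2.2.1} := rfl
    rw [this]
    exact (isClosed_discrete _).preimage hcont
  -- the intersection of all constraints is nonempty, by compactness
  have hinter : (⋂ p, Z p).Nonempty := by
    by_contra hempty
    rw [Set.not_nonempty_iff_eq_empty] at hempty
    have hempty' : (Set.univ ∩ ⋂ p, Z p) = ∅ := by rw [hempty, Set.inter_empty]
    obtain ⟨t, ht⟩ := IsCompact.elim_finite_subfamily_closed isCompact_univ Z hZc hempty'
    -- build a partial section over the span of the finitely many constrained elements
    let G : Finset B := t.image Prod.fst ∪ t.image Prod.snd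
    let B₀ : Submodule ℤ B := Submodule.span ℤ (G : Set B)
    haveI : Module.Finite ℤ B₀ := Module.Finite.span_of_finite ℤ (G.finite_toSet)
    haveI : Module.Free ℤ B₀ := Module.free_of_finite_type_torsion_free'
    let bas := Module.Free.chooseBasis ℤ B₀
    let v : Module.Free.ChooseBasisIndex ℤ B₀ → E :=
      fun i => Function.surjInv hπ (B₀.subtype (bas i))
    let l : B₀ →ₗ[ℤ] E := Module.Basis.constr bas ℕ v
    have hl : ∀ y : B₀, π (l y) = (y : B) := by
      have : π.toIntLinearMap.comp l = B₀.subtype := by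
        apply Module.Basis.ext bas
        intro i
        simp only [LinearMap.comp_apply, l, Module.Basis.constr_basis]
        exact Function.surjInv_eq hπ _
      intro y
      exact congrArg (fun f => f y) (congrArg DFunLike.coe this) |>.trans rfl
    -- a point satisfying all constraints in t
    let x : X := fun b =>
      if h : b ∈ B₀ then ⟨l ⟨b, h⟩, hl ⟨b, h⟩⟩ else (hne b).some
    have hx : x ∈ Set.univ ∩ ⋂ p ∈ t, Z p := by
      refine ⟨trivial, ?_⟩
      rw [Set.mem_iInter₂]
      intro p hp
      have h1 : p.1 ∈ B₀ := Submodule.subset_span (by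
        simp only [G, Finset.coe_union, Set.mem_union, Finset.coe_image]
        exact Or.inl ⟨p, hp, rfl⟩)
      have h2 : p.2 ∈ B₀ := Submodule.subset_span (by
        simp only [G, Finset.coe_union, Set.mem_union, Finset.coe_image]
        exact Or.inr ⟨p, hp, rfl⟩)
      have h12 : p.1 + p.2 ∈ B₀ := B₀.add_mem h1 h2
      show (x (p.1 + p.2)).1 = (x p.1).1 + (x p.2).1
      simp only [x, dif_pos h1, dif_pos h2, dif_pos h12]
      have : (⟨p.1 + p.2, h12⟩ : B₀) = ⟨p.1, h1⟩ + ⟨p.2, h2⟩ := rfl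
      rw [this, map_add]
    rw [ht] at hx
    exact hx
  -- extract the section
  obtain ⟨x, hx⟩ := hinter
  rw [Set.mem_iInter] at hx
  refine ⟨AddMonoidHom.mk' (fun b => (x b).1) ?_, ?_⟩
  · intro a b
    exact hx (a, b)
  · ext b
    exact (x b).2
end

section
/- Let R be an integral domain and n ≥ 2. Every normal nilpotent subgroup of G = T_n(R) is contained in UT_n(R) · Z(G); hence the Fitting subgroup of T_n(R) equals UT_n(R) · Z(T_n(R)). -/
open Matrix
open scoped commutatorElement

/-- The group `T_n(R)` of invertible upper triangular `n × n` matrices,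
as a subgroup of `GL_n(R)`. -/
def triangularGroup (n : ℕ) (R : Type*) [CommRing R] : Subgroup (GL (Fin n) R) where
  carrier := {g | ((g : Matrix (Fin n) (Fin n) R)).BlockTriangular id}
  one_mem' := by simpa using Matrix.blockTriangular_one
  mul_mem' := by
    intro a b ha hb
    simpa [Units.val_mul] using ha.mul hb
  inv_mem' := by
    intro g hg
    haveI : Invertible (g : Matrix (Fin n) (Fin n) R) := g.invertible
    have h := Matrix.blockTriangular_inv_of_blockTriangular hg
    simpa [← Matrix.coe_units_inv] using h

section Aux

variable {R : Type*} [CommRing R] {n : ℕ}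

/-- Projection of an `n × n` matrix onto the `2 × 2` corner determined by two
adjacent indices `i < j = i+1`. -/
def psi2 (i j : Fin n) (M : Matrix (Fin n) (Fin n) R) : Matrix (Fin 2) (Fin 2) R :=
  !![M i i, M i j; 0, M j j]

lemma psi2_one {i j : Fin n} (hij : i ≠ j) :
    psi2 i j (1 : Matrix (Fin n) (Fin n) R) = 1 := by
  ext a b
  fin_cases a <;> fin_cases b <;>
    simp [psi2, Matrix.one_apply, hij]

lemma psi2_mul {i j : Fin n} (hij : (i : ℕ) + 1 = (j : ℕ))
    {M P : Matrix (Fin n) (Fin n) R} (hM : M.BlockTriangular id) (hP : P.BlockTriangular id) :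
    psi2 i j (M * P) = psi2 i j M * psi2 i j P := by
  have hij' : i ≠ j := by
    intro h; subst h; omega
  have e00 : (M * P) i i = M i i * P i i := by
    rw [Matrix.mul_apply]
    refine Finset.sum_eq_single i (fun k _ hk => ?_) (by simp)
    rcases lt_or_gt_of_ne hk with h | h
    · rw [hM (show id k < id i from h), zero_mul]
    · rw [hP (show id i < id k from h), mul_zero]
  have e11 : (M * P) j j = M j j * P j j := by
    rw [Matrix.mul_apply]
    refine Finset.sum_eq_single j (fun k _ hk => ?_) (by simp)
    rcases lt_or_gt_of_ne hk with h | h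
    · rw [hM (show id k < id j from h), zero_mul]
    · rw [hP (show id j < id k from h), mul_zero]
  have e01 : (M * P) i j = M i i * P i j + M i j * P j j := by
    rw [Matrix.mul_apply]
    refine Finset.sum_eq_add i j hij' (fun k _ hk => ?_) (by simp) (by simp)
    rcases lt_or_gt_of_ne hk.1 with h | h
    · rw [hM (show id k < id i from h), zero_mul]
    · have hjk : j < k := by
        rw [Fin.lt_def]
        have : (k : ℕ) ≠ (j : ℕ) := fun hkj => hk.2 (Fin.ext hkj)
        have : (i : ℕ) < (k : ℕ) := h
        omega
      rw [hP (show id j < id k from hjk), mul_zero]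
  ext a b
  fin_cases a <;> fin_cases b <;>
    simp [psi2, Matrix.mul_apply, Fin.sum_univ_two, e00, e01, e11]

/-- The key `2 × 2` commutator computation. -/
lemma key2 (s lam mu b : R) (H : Matrix (Fin 2) (Fin 2) R)
    (hGH : !![lam, b; 0, mu] * H = 1) (hH10 : H 1 0 = 0) :
    !![1, s; 0, 1] * !![lam, b; 0, mu] * !![1, -s; 0, 1] * H
      = !![1, s * ((mu - lam) * H 1 1); 0, 1] := by
  have h00 := congrFun (congrFun hGH 0) 0
  have h01 := congrFun (congrFun hGH 0) 1
  have h11 := congrFun (congrFun hGH 1) 1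
  simp [Matrix.mul_apply, Fin.sum_univ_two, Matrix.one_apply, hH10] at h00 h01 h11
  ext a c
  fin_cases a <;> fin_cases c
  · show _ = (1 : R)
    simp [Matrix.mul_apply, Fin.sum_univ_two, hH10]
    linear_combination h00
  · simp [Matrix.mul_apply, Fin.sum_univ_two, hH10]
    linear_combination h01
  · simp [Matrix.mul_apply, Fin.sum_univ_two, hH10]
  · show _ = (1 : R)
    simp [Matrix.mul_apply, Fin.sum_univ_two, hH10]
    linear_combination h11

lemma t2_mul_t2_neg (s : R) :
    !![1, s; 0, 1] * !![1, -s; 0, 1] = (1 : Matrix (Fin 2) (Fin 2) R) := by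
  ext a b
  fin_cases a <;> fin_cases b <;>
    simp [Matrix.mul_apply, Fin.sum_univ_two, Matrix.one_apply]

end Aux

/-- Every normal nilpotent subgroup of `G = T_n(R)` (`R` an integral domain) is contained in
`UT_n(R) · Z(G)`, i.e. each of its elements is an upper triangular matrix with constant
unit diagonal; hence `Fitt(T_n(R)) = UT_n(R) · Z(T_n(R))`. -/
theorem fitting_of_triangular_group {R : Type*} [CommRing R] [IsDomain R] {n : ℕ} (hn : 2 ≤ n)
    (N : Subgroup (GL (Fin n) R)) (hNle : N ≤ triangularGroup n R)
    (hNnormal : ∀ t ∈ triangularGroup n R, ∀ x ∈ N, t⁻¹ * x * t ∈ N)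
    (hNnilp : Group.IsNilpotent N) :
    ∀ g ∈ N, ∃ α : Rˣ, ∀ i : Fin n, (g : Matrix (Fin n) (Fin n) R) i i = (α : R) := by
  intro g hg
  have hgT : ((g : Matrix (Fin n) (Fin n) R)).BlockTriangular id := hNle hg
  have hginvT : (((g⁻¹ : GL (Fin n) R) : Matrix (Fin n) (Fin n) R)).BlockTriangular id :=
    (triangularGroup n R).inv_mem (hNle hg)
  -- adjacent diagonal entries agree
  have adj : ∀ i j : Fin n, (i : ℕ) + 1 = (j : ℕ) →
      (g : Matrix (Fin n) (Fin n) R) i i = (g : Matrix (Fin n) (Fin n) R) j j := by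
    intro i j hij
    by_contra hne
    have hij' : i ≠ j := by intro h; subst h; omega
    set gM : Matrix (Fin n) (Fin n) R := (g : Matrix (Fin n) (Fin n) R) with hgM
    set H : Matrix (Fin 2) (Fin 2) R :=
      psi2 i j ((g⁻¹ : GL (Fin n) R) : Matrix (Fin n) (Fin n) R) with hH
    have hG2 : psi2 i j gM = !![gM i i, gM i j; 0, gM j j] := rfl
    have hGH : !![gM i i, gM i j; 0, gM j j] * H = 1 := by
      rw [← hG2, hH, ← psi2_mul hij hgT hginvT]
      rw [show gM * ((g⁻¹ : GL (Fin n) R) : Matrix (Fin n) (Fin n) R) = 1 from g.mul_inv]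
      exact psi2_one hij'
    have hH10 : H 1 0 = 0 := by simp [hH, psi2]
    have hmuH : gM j j * H 1 1 = 1 := by
      have h := congrFun (congrFun hGH 1) 1
      simpa [Matrix.mul_apply, Fin.sum_univ_two, Matrix.one_apply] using h
    have hH11 : H 1 1 ≠ 0 := by
      intro h0
      rw [h0, mul_zero] at hmuH
      exact zero_ne_one hmuH
    have hq : (gM j j - gM i i) * H 1 1 ≠ 0 :=
      mul_ne_zero (sub_ne_zero.2 fun h => hne h.symm) hH11
    -- the commutator step
    have step : ∀ w : GL (Fin n) R, w ∈ triangularGroup n R → ∀ s : R,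
        psi2 i j ((w : Matrix (Fin n) (Fin n) R)) = !![1, s; 0, 1] →
        psi2 i j (((w * g * w⁻¹ * g⁻¹ : GL (Fin n) R) : Matrix (Fin n) (Fin n) R))
          = !![1, s * ((gM j j - gM i i) * H 1 1); 0, 1] := by
      intro w hw s hpsiw
      have hwinv : (((w⁻¹ : GL (Fin n) R) : Matrix (Fin n) (Fin n) R)).BlockTriangular id :=
        (triangularGroup n R).inv_mem hw
      have hww : psi2 i j ((w⁻¹ : GL (Fin n) R) : Matrix (Fin n) (Fin n) R)
          * !![1, s; 0, 1] = 1 := by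
        rw [← hpsiw, ← psi2_mul hij hwinv hw,
          show ((w⁻¹ : GL (Fin n) R) : Matrix (Fin n) (Fin n) R)
              * (w : Matrix (Fin n) (Fin n) R) = 1 from w.inv_mul]
        exact psi2_one hij'
      have hpsiwinv : psi2 i j ((w⁻¹ : GL (Fin n) R) : Matrix (Fin n) (Fin n) R)
          = !![1, -s; 0, 1] := by
        calc psi2 i j ((w⁻¹ : GL (Fin n) R) : Matrix (Fin n) (Fin n) R)
            = psi2 i j ((w⁻¹ : GL (Fin n) R) : Matrix (Fin n) (Fin n) R)
              * (!![1, s; 0, 1] * !![1, -s; 0, 1]) := by rw [t2_mul_t2_neg, mul_one]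
          _ = (psi2 i j ((w⁻¹ : GL (Fin n) R) : Matrix (Fin n) (Fin n) R)
              * !![1, s; 0, 1]) * !![1, -s; 0, 1] := by rw [mul_assoc]
          _ = !![1, -s; 0, 1] := by rw [hww, one_mul]
      have hwT : ((w : Matrix (Fin n) (Fin n) R)).BlockTriangular id := hw
      rw [Units.val_mul, Units.val_mul, Units.val_mul,
        psi2_mul hij ((hwT.mul hgT).mul hwinv) hginvT,
        psi2_mul hij (hwT.mul hgT) hwinv,
        psi2_mul hij hwT hgT,
        hpsiw, hpsiwinv, ← hH, hG2]
      exact key2 s (gM i i) (gM j j) (gM i j) H hGH hH10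
    -- the elementary transvection T = 1 + E_{i j}
    set E : Matrix (Fin n) (Fin n) R := Matrix.single i j 1 with hE
    have hE2 : E * E = 0 := Matrix.single_mul_single_of_ne (c := 1) i j i (Ne.symm hij') 1
    have hmul1 : (1 + E) * (1 - E) = 1 := by
      have h : (1 + E) * (1 - E) = 1 - E * E := by noncomm_ring
      rw [h, hE2, sub_zero]
    have hmul2 : (1 - E) * (1 + E) = 1 := by
      have h : (1 - E) * (1 + E) = 1 - E * E := by noncomm_ring
      rw [h, hE2, sub_zero]
    set T : GL (Fin n) R := ⟨1 + E, 1 - E, hmul1, hmul2⟩ with hT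
    have hTtri : T ∈ triangularGroup n R := by
      show ((T : Matrix (Fin n) (Fin n) R)).BlockTriangular id
      intro a b hba
      show (1 + E) a b = 0
      have hab : b ≠ a := ne_of_lt hba
      rw [Matrix.add_apply, Matrix.one_apply_ne (Ne.symm hab), hE,
        Matrix.single_apply_of_ne i j 1 a b ?_, add_zero]
      rintro ⟨rfl, rfl⟩
      exact absurd hba (by simp only [id_eq, Fin.lt_def]; omega)
    have hTinvtri : T⁻¹ ∈ triangularGroup n R := (triangularGroup n R).inv_mem hTtri
    have hpsiTinv : psi2 i j ((T⁻¹ : GL (Fin n) R) : Matrix (Fin n) (Fin n) R)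
        = !![1, -(1 : R); 0, 1] := by
      show psi2 i j (1 - E) = _
      have hEii : E i i = 0 := by
        rw [hE]; exact Matrix.single_apply_of_ne i j 1 i i (fun h => hij' h.2.symm)
      have hEjj : E j j = 0 := by
        rw [hE]; exact Matrix.single_apply_of_ne i j 1 j j (fun h => hij' h.1)
      have hEij : E i j = 1 := by rw [hE]; exact Matrix.single_apply_same i j 1
      unfold psi2
      rw [Matrix.sub_apply, Matrix.sub_apply, Matrix.sub_apply, hEii, hEjj, hEij,
        Matrix.one_apply_eq, Matrix.one_apply_eq, Matrix.one_apply_ne hij', sub_zero]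
      ext a b
      fin_cases a <;> fin_cases b <;> norm_num
    -- base element of N
    have hu : (T⁻¹ * g * T * g⁻¹ : GL (Fin n) R) ∈ N :=
      N.mul_mem (hNnormal T hTtri g hg) (N.inv_mem hg)
    have hbase : psi2 i j ((T⁻¹ * g * T * g⁻¹ : GL (Fin n) R) : Matrix (Fin n) (Fin n) R)
        = !![1, -(1 : R) * ((gM j j - gM i i) * H 1 1); 0, 1] := by
      have h := step T⁻¹ hTinvtri (-(1 : R)) hpsiTinv
      rwa [inv_inv] at h
    -- iterated commutators stay nontrivial
    have main : ∀ k : ℕ, ∃ x : ↥N, x ∈ Subgroup.lowerCentralSeries (⊤ : Subgroup ↥N) k ∧ ∃ s : R, s ≠ 0 ∧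
        psi2 i j (((x : GL (Fin n) R)) : Matrix (Fin n) (Fin n) R) = !![1, s; 0, 1] := by
      intro k
      induction k with
      | zero =>
        refine ⟨⟨_, hu⟩, by simp [lowerCentralSeries_zero], -(1 : R) * ((gM j j - gM i i) * H 1 1),
          mul_ne_zero (by norm_num) hq, hbase⟩
      | succ k ih =>
        obtain ⟨x, hxl, s, hs, hpsix⟩ := ih
        refine ⟨⁅x, (⟨g, hg⟩ : ↥N)⁆, ?_, s * ((gM j j - gM i i) * H 1 1),
          mul_ne_zero hs hq, ?_⟩
        · rw [lowerCentralSeries_succ]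
          exact Subgroup.commutator_mem_commutator hxl (Subgroup.mem_top _)
        · have hcoe : ((⁅x, (⟨g, hg⟩ : ↥N)⁆ : ↥N) : GL (Fin n) R)
              = (x : GL (Fin n) R) * g * (x : GL (Fin n) R)⁻¹ * g⁻¹ := by
            simp [commutatorElement_def]
          rw [hcoe]
          exact step (x : GL (Fin n) R) (hNle x.2) s hpsix
    obtain ⟨k, hk⟩ := nilpotent_iff_lowerCentralSeries.mp hNnilp
    obtain ⟨x, hxl, s, hs, hpsix⟩ := main k
    rw [hk, Subgroup.mem_bot] at hxl
    rw [hxl] at hpsix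
    have h01 := congrFun (congrFun hpsix 0) 1
    simp [psi2, Matrix.one_apply, hij'] at h01
    exact hs h01.symm
  -- all diagonal entries coincide
  have h0 : (0 : ℕ) < n := by omega
  have hconst : ∀ i : Fin n,
      (g : Matrix (Fin n) (Fin n) R) i i = (g : Matrix (Fin n) (Fin n) R) ⟨0, h0⟩ ⟨0, h0⟩ := by
    intro i
    obtain ⟨m, hm⟩ := i
    induction m with
    | zero => rfl
    | succ k ih =>
      have hk : k < n := Nat.lt_of_succ_lt hm
      rw [← ih hk]
      exact (adj ⟨k, hk⟩ ⟨k + 1, hm⟩ rfl).symm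
  -- the common diagonal entry is a unit
  haveI : Invertible (g : Matrix (Fin n) (Fin n) R) := g.invertible
  have hdet : IsUnit ((g : Matrix (Fin n) (Fin n) R)).det :=
    Matrix.isUnit_det_of_invertible _
  rw [Matrix.det_of_upperTriangular hgT] at hdet
  have hprod : ∏ i : Fin n, (g : Matrix (Fin n) (Fin n) R) i i
      = ((g : Matrix (Fin n) (Fin n) R) ⟨0, h0⟩ ⟨0, h0⟩) ^ n := by
    rw [Finset.prod_congr rfl fun i _ => hconst i]
    simp
  rw [hprod] at hdet
  have hunit : IsUnit ((g : Matrix (Fin n) (Fin n) R) ⟨0, h0⟩ ⟨0, h0⟩) :=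
    (isUnit_pow_iff (by omega)).mp hdet
  exact ⟨hunit.unit, fun i => by rw [hconst i, IsUnit.unit_spec]⟩
end

section
/- Let R be a commutative ring with unit and n ≥ 2. The derived subgroup of G = T_n(R) is contained in UT_n(R), and it contains every transvection t_{kl}(β) with l − k ≥ 2, as well as every element t_{i,i+1}((1−α)β) with α ∈ R^×, β ∈ R. -/
open Matrix
open scoped commutatorElement

section Aux
variable {R : Type*} [CommRing R] {n : ℕ}

private lemma diag_mul_diag' {A B : Matrix (Fin n) (Fin n) R}
    (hA : A.BlockTriangular id) (hB : B.BlockTriangular id) (i : Fin n) :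
    (A * B) i i = A i i * B i i := by
  rw [Matrix.mul_apply, Finset.sum_eq_single i]
  · intro k _ hk
    rcases lt_or_gt_of_ne hk with h | h
    · rw [hA (show (id k : Fin n) < id i from h), zero_mul]
    · rw [hB (show (id i : Fin n) < id k from h), mul_zero]
  · intro h; exact absurd (Finset.mem_univ i) h

private lemma tri_transvection {i j : Fin n} (hij : i < j) (c : R) :
    (Matrix.transvection i j c).BlockTriangular id := by
  intro a b hab
  have hab' : b < a := hab
  simp only [Matrix.transvection, Matrix.add_apply, Matrix.one_apply, Matrix.single,
    Matrix.of_apply]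
  rw [if_neg (fun h => absurd (h ▸ hab') (lt_irrefl _)), if_neg]
  · simp
  · rintro ⟨rfl, rfl⟩; exact absurd (lt_trans hij hab') (lt_irrefl _)

private lemma diag_mul_std (d : Fin n → R) (i j : Fin n) (c : R) :
    Matrix.diagonal d * Matrix.single i j c = Matrix.single i j (d i * c) := by
  ext a b
  rw [Matrix.diagonal_mul]
  by_cases h : a = i
  · subst h; by_cases h2 : b = j <;> simp [Matrix.single, h2]
  · simp only [Matrix.single, Matrix.of_apply]
    rw [if_neg (fun hc => h hc.1.symm), if_neg (fun hc => h hc.1.symm)]; ring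

private lemma std_mul_diag (d : Fin n → R) (i j : Fin n) (c : R) :
    Matrix.single i j c * Matrix.diagonal d = Matrix.single i j (c * d j) := by
  ext a b
  rw [Matrix.mul_diagonal]
  by_cases h : b = j
  · subst h; by_cases h2 : a = i <;> simp [Matrix.single, h2]
  · simp only [Matrix.single, Matrix.of_apply]
    rw [if_neg (fun hc => h hc.2.symm), if_neg (fun hc => h hc.2.symm)]; ring

private lemma stdBasisMatrix_neg' (i j : Fin n) (c : R) :
    Matrix.single i j (-c) = -Matrix.single i j c := by
  ext a b; simp [Matrix.single]; split <;> simp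

private lemma comm_trans {k m l : Fin n} (hmk : m ≠ k) (hlk : l ≠ k) (hlm : l ≠ m) (β : R) :
    Matrix.transvection k m β * Matrix.transvection m l 1 * Matrix.transvection k m (-β) *
      Matrix.transvection m l (-1) = 1 + Matrix.single k l β := by
  simp [Matrix.transvection, stdBasisMatrix_neg', mul_add, add_mul, one_mul, mul_one,
    mul_neg, neg_mul, neg_neg, Matrix.single_mul_single_same,
    Matrix.single_mul_single_of_ne, hmk, hlk, hlm, ne_eq,
    mul_one, neg_zero, add_zero, zero_add]
  abel

private lemma comm_diag_trans {i j : Fin n} (hij : i ≠ j) (α : Rˣ) (β : R) :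
    Matrix.diagonal (fun k => if k = i then (α : R) else 1) * Matrix.transvection i j (-β) *
        Matrix.diagonal (fun k => if k = i then ((α⁻¹ : Rˣ) : R) else 1) *
        Matrix.transvection i j β =
      1 + Matrix.single i j ((1 - (α : R)) * β) := by
  have hd : (Matrix.diagonal (fun k => if k = i then (α : R) else 1)) *
      Matrix.diagonal (fun k => if k = i then ((α⁻¹ : Rˣ) : R) else 1) = 1 := by
    rw [Matrix.diagonal_mul_diagonal]
    convert Matrix.diagonal_one using 2
    ext k; by_cases h : k = i <;> simp [h]
  have hc : (1 - (α : R)) * β = β + -((α : R) * β) := by ring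
  have e1 : Matrix.diagonal (fun k => if k = i then (α : R) else 1) *
      (1 + Matrix.single i j (-β)) *
      Matrix.diagonal (fun k => if k = i then ((α⁻¹ : Rˣ) : R) else 1) =
      1 + Matrix.single i j (-((α : R) * β)) := by
    rw [mul_add, mul_one, add_mul, hd, diag_mul_std, std_mul_diag, if_pos rfl,
      if_neg hij.symm]
    ring_nf
  rw [Matrix.transvection, Matrix.transvection, e1, mul_add, add_mul, hc,
    Matrix.single_add, stdBasisMatrix_neg']
  simp [Matrix.single_mul_single_of_ne, Ne.symm hij, hij, mul_add, add_mul, smul_mul_assoc]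
  abel

/-- transvection as a unit -/
def tGL (i j : Fin n) (hij : i ≠ j) (c : R) : GL (Fin n) R where
  val := Matrix.transvection i j c
  inv := Matrix.transvection i j (-c)
  val_inv := by rw [Matrix.transvection_mul_transvection_same _ _ hij]; simp
  inv_val := by rw [Matrix.transvection_mul_transvection_same _ _ hij]; simp

/-- diagonal as a unit -/
def dGL (δ : Fin n → Rˣ) : GL (Fin n) R where
  val := Matrix.diagonal fun k => (δ k : R)
  inv := Matrix.diagonal fun k => ((δ k)⁻¹ : Rˣ)
  val_inv := by
    rw [Matrix.diagonal_mul_diagonal]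
    convert Matrix.diagonal_one using 2
    ext k; simp
  inv_val := by
    rw [Matrix.diagonal_mul_diagonal]
    convert Matrix.diagonal_one using 2
    ext k; simp

end Aux

/-- The derived subgroup of `T_n(R)` is contained in `UT_n(R)` (all its elements are
unitriangular), contains every transvection `t_{kl}(β)` with `l - k ≥ 2`, and contains every
`t_{i,i+1}((1-α)β)` with `α ∈ R^×`, `β ∈ R`. -/
theorem derived_subgroup_triangular_group {R : Type*} [CommRing R] {n : ℕ} (hn : 2 ≤ n) :
    (let D : Subgroup (GL (Fin n) R) :=
      Subgroup.map (triangularGroup n R).subtype (commutator ↥(triangularGroup n R))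
     (∀ g ∈ D, ∀ i : Fin n, (g : Matrix (Fin n) (Fin n) R) i i = 1) ∧
       (∀ k l : Fin n, (k : ℕ) + 2 ≤ (l : ℕ) → ∀ β : R, ∀ u : GL (Fin n) R,
         (u : Matrix (Fin n) (Fin n) R) =
             (1 : Matrix (Fin n) (Fin n) R) + Matrix.single k l β → u ∈ D) ∧
       (∀ i j : Fin n, (i : ℕ) + 1 = (j : ℕ) → ∀ (α : Rˣ) (β : R), ∀ u : GL (Fin n) R,
         (u : Matrix (Fin n) (Fin n) R) =
             (1 : Matrix (Fin n) (Fin n) R) +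
               Matrix.single i j ((1 - (α : R)) * β) → u ∈ D)) := by
  intro D
  set T := triangularGroup n R with hT
  -- a general way to produce elements of `D`
  have hDmem : ∀ a b : ↥T, ∀ u : GL (Fin n) R,
      ((a : GL (Fin n) R) * b * (a : GL (Fin n) R)⁻¹ * (b : GL (Fin n) R)⁻¹ = u) → u ∈ D := by
    intro a b u hu
    refine ⟨⁅a, b⁆, Subgroup.commutator_mem_commutator (Subgroup.mem_top a) (Subgroup.mem_top b),
      ?_⟩
    rw [← hu]
    rfl
  refine ⟨?_, ?_, ?_⟩
  · -- diagonal entries of derived subgroup elements are 1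
    have key : ∀ x : ↥T, ∀ i : Fin n,
        (((x⁻¹ : ↥T) : GL (Fin n) R) : Matrix (Fin n) (Fin n) R) i i *
          (((x : ↥T) : GL (Fin n) R) : Matrix (Fin n) (Fin n) R) i i = 1 := by
      intro x i
      have h2 : (((x⁻¹ : ↥T) : GL (Fin n) R) : Matrix (Fin n) (Fin n) R) *
          (((x : ↥T) : GL (Fin n) R) : Matrix (Fin n) (Fin n) R) = 1 := by
        rw [← Units.val_mul, ← Subgroup.coe_mul, inv_mul_cancel]
        simp
      have h3 : ((((x⁻¹ : ↥T) : GL (Fin n) R) : Matrix (Fin n) (Fin n) R) *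
          (((x : ↥T) : GL (Fin n) R) : Matrix (Fin n) (Fin n) R)) i i = 1 := by
        rw [h2]; simp
      rwa [diag_mul_diag' (x⁻¹).2 x.2] at h3
    have dm : ∀ a b : ↥T, ∀ i : Fin n,
        (((a * b : ↥T) : GL (Fin n) R) : Matrix (Fin n) (Fin n) R) i i =
          ((a : GL (Fin n) R) : Matrix (Fin n) (Fin n) R) i i *
            ((b : GL (Fin n) R) : Matrix (Fin n) (Fin n) R) i i :=
      fun a b i => diag_mul_diag' a.2 b.2 i
    let S : Subgroup ↥T :=
      { carrier := {x : ↥T | ∀ i : Fin n, ((x : GL (Fin n) R) : Matrix (Fin n) (Fin n) R) i i = 1}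
        one_mem' := by intro i; simp
        mul_mem' := by
          intro a b ha hb i
          rw [dm a b i, ha i, hb i, one_mul]
        inv_mem' := by
          intro x hx i
          have h := key x i
          rwa [hx i, mul_one] at h }
    have hle : commutator ↥T ≤ S := by
      rw [commutator_def, Subgroup.commutator_le]
      intro g _ h _
      show ∀ i : Fin n, (((⁅g, h⁆ : ↥T) : GL (Fin n) R) : Matrix (Fin n) (Fin n) R) i i = 1
      intro i
      rw [commutatorElement_def]
      rw [dm (g * h * g⁻¹) h⁻¹ i, dm (g * h) g⁻¹ i, dm g h i]
      have hg := key g i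
      have hh := key h i
      calc ((g : GL (Fin n) R) : Matrix (Fin n) (Fin n) R) i i *
            ((h : GL (Fin n) R) : Matrix (Fin n) (Fin n) R) i i *
            (((g⁻¹ : ↥T) : GL (Fin n) R) : Matrix (Fin n) (Fin n) R) i i *
            (((h⁻¹ : ↥T) : GL (Fin n) R) : Matrix (Fin n) (Fin n) R) i i
          = ((((g⁻¹ : ↥T) : GL (Fin n) R) : Matrix (Fin n) (Fin n) R) i i *
              ((g : GL (Fin n) R) : Matrix (Fin n) (Fin n) R) i i) *
            ((((h⁻¹ : ↥T) : GL (Fin n) R) : Matrix (Fin n) (Fin n) R) i i *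
              ((h : GL (Fin n) R) : Matrix (Fin n) (Fin n) R) i i) := by ring
        _ = 1 := by rw [hg, hh, one_mul]
    intro g hg i
    obtain ⟨x, hx, rfl⟩ := hg
    exact hle hx i
  · -- transvections with `l - k ≥ 2`
    intro k l hkl β u hu
    have hln : (l : ℕ) < n := l.isLt
    set m : Fin n := ⟨(k : ℕ) + 1, by omega⟩ with hm
    have hkm : k < m := by rw [Fin.lt_def]; exact Nat.lt_succ_self _
    have hml : m < l := by rw [Fin.lt_def]; show (k : ℕ) + 1 < (l : ℕ); omega
    let a : ↥T := ⟨tGL k m hkm.ne β, tri_transvection hkm β⟩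
    let b : ↥T := ⟨tGL m l hml.ne 1, tri_transvection hml 1⟩
    refine hDmem a b u ?_
    apply Units.ext
    show Matrix.transvection k m β * Matrix.transvection m l 1 * Matrix.transvection k m (-β) *
        Matrix.transvection m l (-1) = (u : Matrix (Fin n) (Fin n) R)
    rw [hu]
    exact comm_trans hkm.ne' (hkm.trans hml).ne' hml.ne' β
  · -- elements `t_{i,i+1}((1-α)β)`
    intro i j hij α β u hu
    have hijlt : i < j := by rw [Fin.lt_def]; omega
    let δ : Fin n → Rˣ := fun k => if k = i then α else 1
    have hδ : ∀ k, ((δ k : R)) = if k = i then (α : R) else 1 := by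
      intro k; by_cases h : k = i <;> simp [δ, h]
    have hδ' : ∀ k, (((δ k)⁻¹ : Rˣ) : R) = if k = i then ((α⁻¹ : Rˣ) : R) else 1 := by
      intro k; by_cases h : k = i <;> simp [δ, h]
    let a : ↥T := ⟨dGL δ, Matrix.blockTriangular_diagonal _⟩
    let b : ↥T := ⟨tGL i j hijlt.ne (-β), tri_transvection hijlt (-β)⟩
    refine hDmem a b u ?_
    apply Units.ext
    show Matrix.diagonal (fun k => (δ k : R)) * Matrix.transvection i j (-β) *
        Matrix.diagonal (fun k => (((δ k)⁻¹ : Rˣ) : R)) * Matrix.transvection i j (- -β) =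
      (u : Matrix (Fin n) (Fin n) R)
    rw [hu, neg_neg]
    rw [show (fun k => ((δ k : R))) = fun k => if k = i then (α : R) else 1 from funext hδ,
      show (fun k => (((δ k)⁻¹ : Rˣ) : R)) = fun k => if k = i then ((α⁻¹ : Rˣ) : R) else 1 from
        funext hδ']
    exact comm_diag_trans hijlt.ne α β
end

section
/- Let G be a group and c ∈ ℕ. For g ∈ G, the normal closure ⟨g⟩^G is nilpotent of class at most c if and only if for all y₁, …, y_{c+1} ∈ G the left-normed commutator [y₁⁻¹gy₁, y₂⁻¹gy₂, …, y_{c+1}⁻¹gy_{c+1}] equals 1. -/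
open scoped commutatorElement

/-- The left-normed commutator `[[…[[x₁,x₂],x₃],…],x_c]` of a list of group elements. -/
def leftNormedComm {G : Type*} [Group G] : List G → G
  | [] => 1
  | x :: xs => xs.foldl (fun a b => ⁅a, b⁆) x

namespace NilpAux

variable {G : Type*} [Group G]

open Subgroup

lemma map_leftNormedComm {G' : Type*} [Group G'] (f : G →* G') (l : List G) :
    f (leftNormedComm l) = leftNormedComm (l.map f) := by
  cases l with
  | nil => simp [leftNormedComm]
  | cons x xs =>
    simp only [leftNormedComm, List.map_cons]
    induction xs generalizing x with
    | nil => rfl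
    | cons y ys ih =>
      simp only [List.foldl_cons, List.map_cons]
      rw [← map_commutatorElement]
      exact ih ⁅x, y⁆

lemma leftNormedComm_concat (x : G) (xs : List G) (z : G) :
    leftNormedComm ((x :: xs).concat z) = ⁅leftNormedComm (x :: xs), z⁆ := by
  simp [leftNormedComm, List.concat_eq_append, List.foldl_append]

lemma leftNormedComm_concat' (l : List G) (hl : l ≠ []) (z : G) :
    leftNormedComm (l.concat z) = ⁅leftNormedComm l, z⁆ := by
  obtain ⟨x, xs, rfl⟩ := List.exists_cons_of_ne_nil hl
  exact leftNormedComm_concat x xs z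

/-- The set of left-normed commutators of `k+1` conjugates of `g`. -/
def T (g : G) (k : ℕ) : Set G :=
  {h | ∃ y : Fin (k + 1) → G, leftNormedComm (List.ofFn fun i => (y i)⁻¹ * g * y i) = h}

lemma conj_mem_T {g : G} {k : ℕ} {h : G} (x : G) (hh : h ∈ T g k) :
    x * h * x⁻¹ ∈ T g k := by
  obtain ⟨y, rfl⟩ := hh
  refine ⟨fun i => y i * x⁻¹, ?_⟩
  have hlist : (List.ofFn fun i : Fin (k + 1) => (y i * x⁻¹)⁻¹ * g * (y i * x⁻¹)) =
      (List.ofFn fun i : Fin (k + 1) => (y i)⁻¹ * g * y i).map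
        (MulAut.conj x).toMonoidHom := by
    rw [List.map_ofFn]
    congr 1
    funext i
    show (y i * x⁻¹)⁻¹ * g * (y i * x⁻¹) = x * ((y i)⁻¹ * g * y i) * x⁻¹
    group
  rw [hlist, ← map_leftNormedComm]
  rfl

lemma closure_T_normal (g : G) (k : ℕ) : (closure (T g k)).Normal := by
  constructor
  intro n hn x
  have h1 : x * n * x⁻¹ ∈ (closure (T g k)).map (MulAut.conj x).toMonoidHom :=
    ⟨n, hn, rfl⟩
  rw [MonoidHom.map_closure] at h1
  refine closure_mono ?_ h1
  rintro _ ⟨a, ha, rfl⟩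
  exact conj_mem_T x ha

lemma commutator_closure_le (M : Subgroup G) (hM : M.Normal) (A B : Set G)
    (h : ∀ a ∈ A, ∀ b ∈ B, ⁅a, b⁆ ∈ M) :
    ⁅closure A, closure B⁆ ≤ M := by
  haveI := hM
  rw [Subgroup.commutator_le]
  intro p hp q hq
  let φ : G →* G ⧸ M := QuotientGroup.mk' M
  have key : ∀ a ∈ A, ∀ b ∈ B, Commute (φ a) (φ b) := by
    intro a ha b hb
    rw [← commutatorElement_eq_one_iff_commute, ← map_commutatorElement]
    exact (QuotientGroup.eq_one_iff _).mpr (h a ha b hb)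
  have h1 : closure (φ '' A) ≤ Subgroup.centralizer (φ '' B) := by
    rw [closure_le]
    rintro _ ⟨a, ha, rfl⟩
    rw [SetLike.mem_coe, Subgroup.mem_centralizer_iff]
    rintro _ ⟨b, hb, rfl⟩
    exact (key a ha b hb).symm.eq
  have hpmem : φ p ∈ closure (φ '' A) := by
    rw [← MonoidHom.map_closure]
    exact mem_map_of_mem φ hp
  have hqmem : φ q ∈ closure (φ '' B) := by
    rw [← MonoidHom.map_closure]
    exact mem_map_of_mem φ hq
  have hp' : φ p ∈ Subgroup.centralizer (φ '' B) := h1 hpmem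
  have h2 : closure (φ '' B) ≤ Subgroup.centralizer {φ p} := by
    rw [closure_le]
    rintro _ ⟨b, hb, rfl⟩
    rw [SetLike.mem_coe, Subgroup.mem_centralizer_iff]
    rintro z hz
    rw [Set.mem_singleton_iff] at hz
    subst hz
    exact (Subgroup.mem_centralizer_iff.mp hp' _ ⟨b, hb, rfl⟩).symm
  have hcomm : Commute (φ p) (φ q) :=
    Subgroup.mem_centralizer_iff.mp (h2 hqmem) _ rfl
  have : φ ⁅p, q⁆ = 1 := by
    rw [map_commutatorElement, commutatorElement_eq_one_iff_commute]
    exact hcomm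
  exact (QuotientGroup.eq_one_iff _).mp this

/-- Iterated commutators of the normal closure. -/
def D (g : G) : ℕ → Subgroup G
  | 0 => Subgroup.normalClosure ({g} : Set G)
  | k + 1 => ⁅D g k, Subgroup.normalClosure ({g} : Set G)⁆

lemma map_lcs (g : G) (k : ℕ) :
    ((⊤ : Subgroup ↥(Subgroup.normalClosure ({g} : Set G))).lowerCentralSeries k).map
      (Subgroup.normalClosure ({g} : Set G)).subtype = D g k := by
  induction k with
  | zero =>
    show (⊤ : Subgroup _).map _ = _
    rw [← MonoidHom.range_eq_map, subtype_range]
    rfl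
  | succ k ih =>
    show (⁅(⊤ : Subgroup _).lowerCentralSeries k, (⊤ : Subgroup _)⁆).map _ = ⁅D g k, _⁆
    rw [Subgroup.map_commutator, ih, ← MonoidHom.range_eq_map, subtype_range]

lemma D_zero_eq (g : G) : D g 0 = closure (T g 0) := by
  show Subgroup.normalClosure ({g} : Set G) = _
  rw [Subgroup.normalClosure]
  congr 1
  ext x
  rw [Group.mem_conjugatesOfSet_iff]
  constructor
  · rintro ⟨a, ha, hc⟩
    rw [Set.mem_singleton_iff] at ha
    subst ha
    obtain ⟨c, hc⟩ := isConj_iff.mp hc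
    refine ⟨fun _ => c⁻¹, ?_⟩
    simp [leftNormedComm, ← hc]
  · rintro ⟨y, rfl⟩
    refine ⟨g, rfl, isConj_iff.mpr ⟨(y 0)⁻¹, ?_⟩⟩
    simp [leftNormedComm]

lemma ofFn_conj_snoc (g : G) (k : ℕ) (y : Fin (k + 1) → G) (z : G) :
    (List.ofFn fun i : Fin (k + 2) => ((Fin.snoc y z : Fin (k + 2) → G) i)⁻¹ * g *
        (Fin.snoc y z : Fin (k + 2) → G) i) =
      (List.ofFn fun i : Fin (k + 1) => (y i)⁻¹ * g * y i).concat (z⁻¹ * g * z) := by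
  rw [List.ofFn_succ']
  congr 1
  · congr 1
    funext i
    rw [Fin.snoc_castSucc]
  · rw [Fin.snoc_last]

lemma ofFn_ne_nil (g : G) (k : ℕ) (y : Fin (k + 1) → G) :
    (List.ofFn fun i : Fin (k + 1) => (y i)⁻¹ * g * y i) ≠ [] := by
  intro h
  simpa using congrArg List.length h

lemma D_eq_closure_T (g : G) (k : ℕ) : D g k = closure (T g k) := by
  induction k with
  | zero => exact D_zero_eq g
  | succ k ih =>
    have hD : D g (k + 1) = ⁅closure (T g k), closure (T g 0)⁆ := by
      show ⁅D g k, Subgroup.normalClosure ({g} : Set G)⁆ = _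
      rw [ih, show Subgroup.normalClosure ({g} : Set G) = closure (T g 0) from D_zero_eq g]
    rw [hD]
    apply le_antisymm
    · refine commutator_closure_le _ (closure_T_normal g (k + 1)) _ _ ?_
      rintro _ ⟨y, rfl⟩ _ ⟨y', rfl⟩
      apply Subgroup.subset_closure
      refine ⟨Fin.snoc y (y' 0), ?_⟩
      have hb : leftNormedComm (List.ofFn fun i : Fin 1 => (y' i)⁻¹ * g * y' i) =
          (y' 0)⁻¹ * g * y' 0 := by simp [leftNormedComm]
      rw [ofFn_conj_snoc, leftNormedComm_concat' _ (ofFn_ne_nil g k y), hb]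
    · rw [closure_le]
      rintro _ ⟨Y, rfl⟩
      set y : Fin (k + 1) → G := fun i => Y i.castSucc with hy
      set z : G := Y (Fin.last _) with hz
      have hY : Y = Fin.snoc y z := by
        funext i
        induction i using Fin.lastCases with
        | last => rw [Fin.snoc_last]
        | cast j => rw [Fin.snoc_castSucc]
      rw [hY, ofFn_conj_snoc, leftNormedComm_concat' _ (ofFn_ne_nil g k y)]
      refine SetLike.mem_coe.mpr (Subgroup.commutator_mem_commutator ?_ ?_)
      · exact Subgroup.subset_closure ⟨y, rfl⟩
      · exact Subgroup.subset_closure ⟨fun _ => z, by simp [leftNormedComm]⟩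

end NilpAux

/-- The normal closure `⟨g⟩^G` is nilpotent of class at most `c` iff for all
`y₁, …, y_{c+1} ∈ G` the left-normed commutator
`[y₁⁻¹gy₁, …, y_{c+1}⁻¹gy_{c+1}]` is trivial. -/
theorem normalClosure_nilpotent_iff {G : Type*} [Group G] (g : G) (c : ℕ) :
    (⊤ : Subgroup ↥(Subgroup.normalClosure ({g} : Set G))).lowerCentralSeries c = ⊥ ↔
      ∀ y : Fin (c + 1) → G,
        leftNormedComm (List.ofFn (fun i => (y i)⁻¹ * g * y i)) = 1 := by
  have h1 : (⊤ : Subgroup ↥(Subgroup.normalClosure ({g} : Set G))).lowerCentralSeries c = ⊥ ↔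
      NilpAux.D g c = ⊥ := by
    rw [← NilpAux.map_lcs g c,
      Subgroup.map_eq_bot_iff_of_injective _ (Subgroup.subtype_injective _)]
  rw [h1, NilpAux.D_eq_closure_T, Subgroup.closure_eq_bot_iff]
  constructor
  · intro h y
    exact h ⟨y, rfl⟩
  · rintro h _ ⟨y, rfl⟩
    exact h y
end

section
/- Let O be the ring of integers of a number field, let λ₁, …, λ_s be distinct elements of O, and let δ ∈ O be nonzero. Then there are only finitely many α ∈ O such that α − λ_i divides δ in O for all i = 1, …, s, where s is the degree of the number field over ℚ. -/
open NumberField Finset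

lemma prod_embeddings_abs {K : Type*} [Field K] [NumberField K] (x : K) :
    ∏ φ : K →+* ℂ, ‖φ x‖ = ((|Algebra.norm ℚ x| : ℚ) : ℝ) := by
  have h := congr_arg (fun z : ℂ => ‖z‖) (Algebra.norm_eq_prod_embeddings ℚ ℂ x)
  rw [norm_prod] at h
  rw [Fintype.prod_equiv (RingHom.equivRatAlgHom K ℂ) (fun φ : K →+* ℂ => ‖φ x‖)
      (fun σ : K →ₐ[ℚ] ℂ => ‖σ x‖) (fun φ => by
        simp [RingHom.equivRatAlgHom_apply])]
  rw [← h, eq_ratCast, Rat.cast_abs, Complex.norm_ratCast]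

/-- Let `O` be the ring of integers of a number field of degree `s` over `ℚ`,
`λ₁, …, λ_s` distinct elements of `O`, and `δ ∈ O` nonzero. Then only finitely many
`α ∈ O` satisfy `(α - λᵢ) ∣ δ` for all `i`. -/
theorem finite_divisors_shift {K : Type*} [Field K] [NumberField K]
    {s : ℕ} (hs : s = Module.finrank ℚ K)
    (lam : Fin s → 𝓞 K) (hlam : Function.Injective lam)
    (δ : 𝓞 K) (hδ : δ ≠ 0) :
    {α : 𝓞 K | ∀ i : Fin s, (α - lam i) ∣ δ}.Finite := by
  classical
  have hcard : Fintype.card (K →+* ℂ) = s := by rw [NumberField.Embeddings.card K ℂ, hs]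
  have hspos : 0 < s := hs ▸ Module.finrank_pos
  have hφne : Nonempty (K →+* ℂ) := Fintype.card_pos_iff.mp (hcard ▸ hspos)
  have hine : Nonempty (Fin s) := ⟨⟨0, hspos⟩⟩
  -- the norm bound M
  set M : ℝ := ((|Algebra.norm ℤ δ| : ℤ) : ℝ) with hMdef
  have hNδ : Algebra.norm ℤ δ ≠ 0 := by
    rwa [Algebra.norm_ne_zero_iff]
  have normbound : ∀ x : 𝓞 K, x ∣ δ → ∏ φ : K →+* ℂ, ‖φ (x : K)‖ ≤ M := by
    intro x hx
    have hdvd : Algebra.norm ℤ x ∣ Algebra.norm ℤ δ := map_dvd (Algebra.norm ℤ) hx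
    have habs : |Algebra.norm ℤ x| ≤ |Algebra.norm ℤ δ| :=
      Int.le_of_dvd (abs_pos.mpr hNδ) ((abs_dvd _ _).mpr ((dvd_abs _ _).mpr hdvd))
    rw [prod_embeddings_abs, ← Algebra.coe_norm_int, hMdef]
    exact_mod_cast habs
  -- separation constant e
  obtain ⟨e, he, hsep⟩ : ∃ e : ℝ, 0 < e ∧ ∀ (σ : K →+* ℂ) (i j : Fin s), i ≠ j →
      2 * e ≤ ‖σ (lam i : K) - σ (lam j : K)‖ := by
    have hne : (Finset.univ : Finset ((K →+* ℂ) × Fin s × Fin s)).Nonempty :=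
      univ_nonempty
    set g : (K →+* ℂ) × Fin s × Fin s → ℝ := fun p =>
      if p.2.1 = p.2.2 then 1 else ‖p.1 (lam p.2.1 : K) - p.1 (lam p.2.2 : K)‖ with hg
    refine ⟨(univ.inf' hne g) / 2, ?_, ?_⟩
    · rw [div_pos_iff]
      left
      constructor
      · rw [Finset.lt_inf'_iff]
        rintro ⟨σ, i, j⟩ -
        by_cases hij : i = j
        · simp [hg, hij]
        · simp only [hg, if_neg hij]
          rw [norm_pos_iff, sub_ne_zero]
          exact fun hc => hij (hlam (RingOfIntegers.coe_injective (σ.injective hc)))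
      · norm_num
    · intro σ i j hij
      have h1 : univ.inf' hne g ≤ ‖σ (lam i : K) - σ (lam j : K)‖ := by
        calc univ.inf' hne g ≤ g (σ, i, j) := Finset.inf'_le _ (mem_univ _)
          _ = ‖σ (lam i : K) - σ (lam j : K)‖ := by simp [hg, hij]
      linarith
  -- bound on the lambdas
  set L : ℝ := univ.sup' univ_nonempty
      (fun p : (K →+* ℂ) × Fin s => ‖p.1 (lam p.2 : K)‖) with hL
  have hLle : ∀ (σ : K →+* ℂ) (i : Fin s), ‖σ (lam i : K)‖ ≤ L :=
    fun σ i => Finset.le_sup' (f := fun p : (K →+* ℂ) × Fin s => ‖p.1 (lam p.2 : K)‖)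
      (mem_univ (σ, i))
  -- the constant C
  set C : ℝ := max e ((M + 1) / e ^ (s - 1)) with hC
  have heC : e ≤ C := le_max_left _ _
  have hCpos : 0 < C := lt_of_lt_of_le he heC
  -- main claim
  have key : ∀ α ∈ {α : 𝓞 K | ∀ i : Fin s, (α - lam i) ∣ δ}, ∀ φ₀ : K →+* ℂ,
      ‖φ₀ (α : K)‖ ≤ C + L := by
    intro α hα φ₀
    have : ∃ i : Fin s, ‖φ₀ (α : K) - φ₀ (lam i : K)‖ ≤ C := by
      by_contra hcon
      push_neg at hcon
      set R : (K →+* ℂ) → Finset (Fin s) := fun σ =>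
        univ.filter fun i => ‖σ (α : K) - σ (lam i : K)‖ < e with hR
      have hR1 : ∀ σ, (R σ).card ≤ 1 := by
        intro σ
        refine Finset.card_le_one.mpr fun i hi j hj => ?_
        simp only [hR, mem_filter] at hi hj
        by_contra hij
        have h2 := hsep σ i j hij
        have : ‖σ (lam i : K) - σ (lam j : K)‖ < 2 * e := by
          calc ‖σ (lam i : K) - σ (lam j : K)‖
              ≤ ‖σ (lam i : K) - σ (α : K)‖ + ‖σ (α : K) - σ (lam j : K)‖ :=
                norm_sub_le_norm_sub_add_norm_sub _ _ _
            _ < e + e := by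
                rw [norm_sub_rev]
                exact add_lt_add hi.2 hj.2
            _ = 2 * e := by ring
        linarith
      have hR0 : R φ₀ = ∅ := by
        rw [Finset.eq_empty_iff_forall_notMem]
        intro i hi
        simp only [hR, mem_filter] at hi
        exact absurd (lt_of_lt_of_le hi.2 heC) (not_lt.mpr (hcon i).le)
      obtain ⟨i, hi⟩ : ∃ i : Fin s, i ∉ univ.biUnion R := by
        by_contra hall
        push_neg at hall
        have hsub : (univ : Finset (Fin s)) ⊆ univ.biUnion R := fun i _ => hall i
        have hcard2 : s ≤ (univ.biUnion R).card := by
          simpa using Finset.card_le_card hsub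
        have : (univ.biUnion R).card ≤ s - 1 := by
          calc (univ.biUnion R).card ≤ ∑ σ : K →+* ℂ, (R σ).card :=
              Finset.card_biUnion_le
            _ = ∑ σ ∈ univ.erase φ₀, (R σ).card := by
                rw [← Finset.sum_erase_add _ _ (mem_univ φ₀), hR0]
                simp
            _ ≤ ∑ σ ∈ univ.erase φ₀, 1 := Finset.sum_le_sum fun σ _ => hR1 σ
            _ = s - 1 := by
                rw [Finset.sum_const, smul_eq_mul, mul_one,
                  Finset.card_erase_of_mem (mem_univ φ₀), Finset.card_univ, hcard]
        omega
      -- i avoids all the small-distance sets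
      have hbig : ∀ σ : K →+* ℂ, e ≤ ‖σ (α : K) - σ (lam i : K)‖ := by
        intro σ
        by_contra hlt
        exact hi (Finset.mem_biUnion.mpr ⟨σ, mem_univ σ,
          by simp only [hR, mem_filter]; exact ⟨mem_univ i, not_le.mp hlt⟩⟩)
      have hprod : C * e ^ (s - 1) ≤ ∏ φ : K →+* ℂ, ‖φ ((α - lam i : 𝓞 K) : K)‖ := by
        have heq : ∀ φ : K →+* ℂ, ‖φ ((α - lam i : 𝓞 K) : K)‖ = ‖φ (α : K) - φ (lam i : K)‖ := by
          intro φ; push_cast [map_sub]; rfl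
        calc C * e ^ (s - 1)
            ≤ ‖φ₀ (α : K) - φ₀ (lam i : K)‖ * ∏ φ ∈ univ.erase φ₀, ‖φ (α : K) - φ (lam i : K)‖ := by
              apply mul_le_mul (hcon i).le _ (by positivity) (norm_nonneg _)
              calc e ^ (s - 1) = ∏ _φ ∈ univ.erase φ₀, e := by
                    rw [Finset.prod_const, Finset.card_erase_of_mem (mem_univ φ₀),
                      Finset.card_univ, hcard]
                _ ≤ ∏ φ ∈ univ.erase φ₀, ‖φ (α : K) - φ (lam i : K)‖ :=
                    Finset.prod_le_prod (fun _ _ => he.le) (fun φ _ => hbig φ)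
          _ = ∏ φ : K →+* ℂ, ‖φ (α : K) - φ (lam i : K)‖ :=
              (Finset.mul_prod_erase univ (fun φ : K →+* ℂ => ‖φ (α : K) - φ (lam i : K)‖) (mem_univ φ₀))
          _ = ∏ φ : K →+* ℂ, ‖φ ((α - lam i : 𝓞 K) : K)‖ := by
              exact Finset.prod_congr rfl fun φ _ => (heq φ).symm
      have hMle : M + 1 ≤ M := by
        have h1 : (M + 1) / e ^ (s - 1) ≤ C := le_max_right _ _
        have h2 : M + 1 ≤ C * e ^ (s - 1) := by
          rw [← div_le_iff₀ (by positivity)] at *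
          exact h1
        have h3 := normbound (α - lam i) (hα i)
        linarith
      linarith
    obtain ⟨i, hi⟩ := this
    calc ‖φ₀ (α : K)‖ ≤ ‖φ₀ (α : K) - φ₀ (lam i : K)‖ + ‖φ₀ (lam i : K)‖ := by
          simpa using norm_add_le (φ₀ (α : K) - φ₀ (lam i : K)) (φ₀ (lam i : K))
      _ ≤ C + L := add_le_add hi (hLle φ₀ i)
  -- conclude via finiteness of algebraic integers with bounded conjugates
  have hfin := NumberField.Embeddings.finite_of_norm_le K ℂ (C + L)
  refine Set.Finite.subset (Set.Finite.preimage (f := fun α : 𝓞 K => (α : K))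
    (RingOfIntegers.coe_injective.injOn) hfin) ?_
  intro α hα
  exact ⟨RingOfIntegers.isIntegral_coe α, fun φ => key α hα φ⟩
end

section
/- Let O be the ring of integers of a number field, X a finite set of elements of O each different from 0 and 1, and λ ∈ O a nonzero element that is not a root of unity. Then there exists a natural number n such that λⁿ − α is not a unit of O for all α ∈ X. -/
open NumberField Finset

section Aux

variable {K : Type*} [Field K] [NumberField K]

private lemma prod_norm_embeddings_eq (x : K) :
    (∏ φ : K →+* ℂ, ‖φ x‖) = |(Algebra.norm ℚ x : ℚ)| := by
  have h := congr_arg (‖·‖) (Algebra.norm_eq_prod_embeddings ℚ ℂ x)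
  rw [norm_prod] at h
  rw [Fintype.prod_equiv (RingHom.equivRatAlgHom K ℂ) (fun φ : K →+* ℂ => ‖φ x‖)
      (fun σ : K →ₐ[ℚ] ℂ => ‖σ x‖)
      (fun φ => by simp [RingHom.equivRatAlgHom_apply])]
  rw [← h, eq_ratCast]
  rw [show ((Algebra.norm ℚ x : ℚ) : ℂ) = ((Algebra.norm ℚ x : ℚ) : ℝ) by push_cast; ring]
  rw [Complex.norm_real, Real.norm_eq_abs]
  push_cast
  ring

private lemma prod_norm_unit_eq_one {u : 𝓞 K} (hu : IsUnit u) :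
    (∏ φ : K →+* ℂ, ‖φ (algebraMap (𝓞 K) K u)‖) = 1 := by
  rw [prod_norm_embeddings_eq]
  rw [NumberField.isUnit_iff_norm] at hu
  rw [show (Algebra.norm ℚ (algebraMap (𝓞 K) K u)) = (RingOfIntegers.norm ℚ u : ℚ) from
    (RingOfIntegers.coe_norm ℚ u).symm]
  exact_mod_cast hu

private lemma exists_embedding_one_lt_norm (lam : 𝓞 K) (hlam : lam ≠ 0)
    (hroot : ∀ n : ℕ, 0 < n → lam ^ n ≠ 1) :
    ∃ φ : K →+* ℂ, 1 < ‖φ (algebraMap (𝓞 K) K lam)‖ := by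
  by_contra hcon
  push_neg at hcon
  have hmaps : Set.MapsTo (fun n : ℕ => (algebraMap (𝓞 K) K lam) ^ n) Set.univ
      {x : K | IsIntegral ℤ x ∧ ∀ φ : K →+* ℂ, ‖φ x‖ ≤ 1} := by
    intro n _
    refine ⟨?_, fun φ => ?_⟩
    · exact (RingOfIntegers.isIntegral_coe lam).pow n
    · rw [map_pow, norm_pow]
      exact pow_le_one₀ (norm_nonneg _) (hcon φ)
  obtain ⟨a, -, b, -, hab, heq⟩ := Set.Infinite.exists_ne_map_eq_of_mapsTo
    Set.infinite_univ hmaps (NumberField.Embeddings.finite_of_norm_le K ℂ 1)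
  have key : ∀ {a b : ℕ}, b < a →
      (algebraMap (𝓞 K) K lam) ^ a = (algebraMap (𝓞 K) K lam) ^ b → False := by
    intro a b hba h
    have h' : lam ^ a = lam ^ b := RingOfIntegers.coe_injective
      (by rw [map_pow, map_pow]; exact h)
    have hz : lam ^ b * (lam ^ (a - b) - 1) = 0 := by
      rw [mul_sub, mul_one, ← pow_add, Nat.add_sub_cancel' hba.le, h', sub_self]
    rcases mul_eq_zero.mp hz with h0 | h0
    · exact pow_ne_zero b hlam h0
    · exact hroot (a - b) (Nat.sub_pos_of_lt hba) (by rwa [sub_eq_zero] at h0)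
  rcases hab.lt_or_gt with h | h
  · exact key h heq.symm
  · exact key h heq

end Aux

/-- Let `O` be the ring of integers of a number field, `X` a finite set of elements of `O`
each different from `0` and `1`, and `λ ∈ O` nonzero and not a root of unity. Then there is a
natural number `n` such that `λ^n - α` is not a unit of `O` for all `α ∈ X`. -/
theorem exists_pow_sub_not_unit {K : Type*} [Field K] [NumberField K]
    (X : Finset (𝓞 K)) (hX : ∀ α ∈ X, α ≠ 0 ∧ α ≠ 1)
    (lam : 𝓞 K) (hlam : lam ≠ 0) (hroot : ∀ n : ℕ, 0 < n → lam ^ n ≠ 1) :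
    ∃ n : ℕ, ∀ α ∈ X, ¬IsUnit (lam ^ n - α) := by
  classical
  by_contra hcon
  push_neg at hcon
  choose f hfX hfU using hcon
  set em : 𝓞 K →+* K := algebraMap (𝓞 K) K with hem
  obtain ⟨φ₀, hφ₀⟩ := exists_embedding_one_lt_norm lam hlam hroot
  set S : Finset (K →+* ℂ) := Finset.univ.filter (fun φ => ‖φ (em lam)‖ ≤ 1) with hS
  set Sc : Finset (K →+* ℂ) := Finset.univ.filter (fun φ => ¬ ‖φ (em lam)‖ ≤ 1) with hSc
  set A0 : ℝ := ∑ α ∈ X, ∑ φ : K →+* ℂ, ‖φ (em α)‖ with hA0def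
  have hA0 : ∀ α ∈ X, ∀ φ : K →+* ℂ, ‖φ (em α)‖ ≤ A0 := by
    intro α hα φ
    calc ‖φ (em α)‖ ≤ ∑ ψ : K →+* ℂ, ‖ψ (em α)‖ :=
          Finset.single_le_sum (f := fun ψ : K →+* ℂ => ‖ψ (em α)‖)
            (fun _ _ => norm_nonneg _) (Finset.mem_univ φ)
      _ ≤ A0 := Finset.single_le_sum (f := fun β => ∑ ψ : K →+* ℂ, ‖ψ (em β)‖)
          (fun β _ => Finset.sum_nonneg fun _ _ => norm_nonneg _) hα
  have hA0nn : 0 ≤ A0 := Finset.sum_nonneg fun _ _ => Finset.sum_nonneg fun _ _ => norm_nonneg _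
  have hφ₀Sc : φ₀ ∈ Sc := Finset.mem_filter.mpr ⟨Finset.mem_univ _, not_le.mpr hφ₀⟩
  obtain ⟨ψ, hψSc, hψmin⟩ := Sc.exists_min_image (fun φ => ‖φ (em lam)‖) ⟨φ₀, hφ₀Sc⟩
  set t : ℝ := ‖ψ (em lam)‖ with htdef
  have ht1 : 1 < t := not_le.mp (Finset.mem_filter.mp hψSc).2
  have ht0 : 0 < t := lt_trans one_pos ht1
  set u : ℕ → 𝓞 K := fun n => lam ^ n - f n with hu
  have hcast : ∀ n, em (u n) = (em lam) ^ n - em (f n) := by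
    intro n; rw [hu]; simp [map_sub, map_pow]
  have hgrow : ∀ C : ℝ, ∃ N : ℕ, ∀ i, N ≤ i → C + A0 ≤ t ^ i := by
    intro C
    obtain ⟨N, hN⟩ := pow_unbounded_of_one_lt (C + A0) ht1
    exact ⟨N, fun i hi => le_trans hN.le (pow_le_pow_right₀ ht1.le hi)⟩
  have E : ∀ n, 1 ≤ t ^ n - A0 →
      (∏ φ ∈ S, ‖φ (em (u n))‖) * (t ^ n - A0) ≤ 1 := by
    intro n hn
    have hprod := prod_norm_unit_eq_one (hfU n)
    have hsplit : (∏ φ ∈ S, ‖φ (em (u n))‖) * (∏ φ ∈ Sc, ‖φ (em (u n))‖) = 1 := by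
      rw [← hprod]
      exact Finset.prod_filter_mul_prod_filter_not Finset.univ _ _
    have hfac : ∀ φ ∈ Sc, t ^ n - A0 ≤ ‖φ (em (u n))‖ := by
      intro φ hφ
      have h1 : t ≤ ‖φ (em lam)‖ := hψmin φ hφ
      have h2 : ‖φ (em (f n))‖ ≤ A0 := hA0 _ (hfX n) φ
      have h3 : t ^ n ≤ ‖φ (em lam)‖ ^ n := pow_le_pow_left₀ ht0.le h1 n
      calc t ^ n - A0 ≤ ‖φ (em lam)‖ ^ n - ‖φ (em (f n))‖ := by linarith
        _ = ‖φ ((em lam) ^ n)‖ - ‖φ (em (f n))‖ := by rw [map_pow, norm_pow]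
        _ ≤ ‖φ ((em lam) ^ n) - φ (em (f n))‖ := norm_sub_norm_le _ _
        _ = ‖φ (em (u n))‖ := by rw [hcast n, map_sub]
    have hScprod : t ^ n - A0 ≤ ∏ φ ∈ Sc, ‖φ (em (u n))‖ := by
      rw [← Finset.mul_prod_erase Sc _ hψSc]
      have h1 : (1 : ℝ) ≤ ∏ φ ∈ Sc.erase ψ, ‖φ (em (u n))‖ := by
        calc (1 : ℝ) = ∏ _φ ∈ Sc.erase ψ, (1 : ℝ) := Finset.prod_const_one.symm
          _ ≤ ∏ φ ∈ Sc.erase ψ, ‖φ (em (u n))‖ :=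
              Finset.prod_le_prod (fun _ _ => zero_le_one)
                (fun φ hφ => le_trans hn (hfac φ (Finset.mem_of_mem_erase hφ)))
      calc t ^ n - A0 ≤ ‖ψ (em (u n))‖ * 1 := by rw [mul_one]; exact hfac ψ hψSc
        _ ≤ ‖ψ (em (u n))‖ * ∏ φ ∈ Sc.erase ψ, ‖φ (em (u n))‖ :=
            mul_le_mul_of_nonneg_left h1 (norm_nonneg _)
    have hSnn : 0 ≤ ∏ φ ∈ S, ‖φ (em (u n))‖ :=
      Finset.prod_nonneg fun _ _ => norm_nonneg _
    calc (∏ φ ∈ S, ‖φ (em (u n))‖) * (t ^ n - A0)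
        ≤ (∏ φ ∈ S, ‖φ (em (u n))‖) * (∏ φ ∈ Sc, ‖φ (em (u n))‖) :=
          mul_le_mul_of_nonneg_left hScprod hSnn
      _ = 1 := hsplit
  by_cases hSne : S.Nonempty
  swap
  · obtain ⟨N, hN⟩ := hgrow 2
    have h2N : 2 + A0 ≤ t ^ N := hN N le_rfl
    have h1 := E N (by linarith)
    rw [Finset.not_nonempty_iff_eq_empty.mp hSne, Finset.prod_empty, one_mul] at h1
    linarith
  · set s : ℕ := S.card with hs
    have hs0 : s ≠ 0 := (Finset.card_pos.mpr hSne).ne'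
    have hmin : ∀ n : ℕ, ∃ φ ∈ S, ∀ χ ∈ S, ‖φ (em (u n))‖ ≤ ‖χ (em (u n))‖ :=
      fun n => S.exists_min_image (fun φ => ‖φ (em (u n))‖) hSne
    choose g hgS hgmin using hmin
    have M : ∀ n, 1 ≤ t ^ n - A0 → ‖g n (em (u n))‖ ^ s * (t ^ n - A0) ≤ 1 := by
      intro n hn
      refine le_trans (mul_le_mul_of_nonneg_right ?_ (by linarith)) (E n hn)
      calc ‖g n (em (u n))‖ ^ s = ∏ _φ ∈ S, ‖g n (em (u n))‖ := by
            rw [Finset.prod_const, hs]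
        _ ≤ ∏ φ ∈ S, ‖φ (em (u n))‖ :=
            Finset.prod_le_prod (fun _ _ => norm_nonneg _) (fun φ hφ => hgmin n φ hφ)
    have hsmall : ∀ δ : ℝ, 0 < δ → ∃ N, ∀ i, N ≤ i → ‖g i (em (u i))‖ ≤ δ := by
      intro δ hδ
      have hδs : 0 < δ ^ s := pow_pos hδ s
      obtain ⟨N, hN⟩ := hgrow (max 1 (δ ^ s)⁻¹)
      refine ⟨N, fun i hi => ?_⟩
      have hNi := hN i hi
      have h1 : 1 ≤ t ^ i - A0 := by
        have := le_max_left 1 ((δ ^ s)⁻¹); linarith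
      have h2 : (δ ^ s)⁻¹ ≤ t ^ i - A0 := by
        have := le_max_right 1 ((δ ^ s)⁻¹); linarith
      have h3 := M i h1
      have h2' : 1 ≤ δ ^ s * (t ^ i - A0) := by
        calc (1 : ℝ) = δ ^ s * (δ ^ s)⁻¹ := (mul_inv_cancel₀ (ne_of_gt hδs)).symm
          _ ≤ δ ^ s * (t ^ i - A0) := mul_le_mul_of_nonneg_left h2 hδs.le
      have h4 : ‖g i (em (u i))‖ ^ s ≤ δ ^ s := by
        have h5 : ‖g i (em (u i))‖ ^ s * (t ^ i - A0) ≤ δ ^ s * (t ^ i - A0) :=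
          le_trans h3 h2'
        exact le_of_mul_le_mul_right h5 (by linarith)
      exact le_of_pow_le_pow_left₀ hs0 hδ.le h4
    -- pigeonhole: window
    set w : ℕ := X.card * s with hw
    have hpigeon : ∀ N : ℕ, ∃ i, N ≤ i ∧ ∃ k, 1 ≤ k ∧ k ≤ w ∧
        f i = f (i + k) ∧ g i = g (i + k) := by
      intro N
      have hcard : (X ×ˢ S).card < (Finset.range (w + 1)).card := by
        rw [Finset.card_range, Finset.card_product, hw, hs]; omega
      have hmapsto : ∀ j ∈ Finset.range (w + 1), (f (N + j), g (N + j)) ∈ X ×ˢ S :=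
        fun j _ => Finset.mk_mem_product (hfX (N + j)) (hgS (N + j))
      obtain ⟨j₁, hj₁, j₂, hj₂, hne, heq⟩ :=
        Finset.exists_ne_map_eq_of_card_lt_of_maps_to hcard hmapsto
      rw [Finset.mem_range] at hj₁ hj₂
      rcases hne.lt_or_gt with h | h
      · refine ⟨N + j₁, Nat.le_add_right _ _, j₂ - j₁, by omega, by omega, ?_, ?_⟩
        · rw [show N + j₁ + (j₂ - j₁) = N + j₂ by omega]
          exact congrArg Prod.fst heq
        · rw [show N + j₁ + (j₂ - j₁) = N + j₂ by omega]
          exact congrArg Prod.snd heq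
      · refine ⟨N + j₂, Nat.le_add_right _ _, j₁ - j₂, by omega, by omega, ?_, ?_⟩
        · rw [show N + j₂ + (j₁ - j₂) = N + j₁ by omega]
          exact (congrArg Prod.fst heq).symm
        · rw [show N + j₂ + (j₁ - j₂) = N + j₁ by omega]
          exact (congrArg Prod.snd heq).symm
    have hfix : ∃ k, 1 ≤ k ∧ ∃ φ, φ ∈ S ∧ ∀ N, ∃ i, N ≤ i ∧
        g i = φ ∧ g (i + k) = φ ∧ f i = f (i + k) := by
      by_contra hno
      push_neg at hno
      have hno' : ∀ (k : ℕ) (φ : K →+* ℂ), ∃ N : ℕ, 1 ≤ k → φ ∈ S → ∀ i, N ≤ i →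
          ¬(g i = φ ∧ g (i + k) = φ ∧ f i = f (i + k)) := by
        intro k φ
        by_cases h1 : 1 ≤ k
        · by_cases h2 : φ ∈ S
          · obtain ⟨N, hN⟩ := hno k h1 φ h2
            exact ⟨N, fun _ _ i hi hbad => (hN i hi hbad.1 hbad.2.1) hbad.2.2⟩
          · exact ⟨0, fun _ h => absurd h h2⟩
        · exact ⟨0, fun h => absurd h h1⟩
      choose Nf hNf using hno'
      set Nstar : ℕ := (Finset.range (w + 1)).sup (fun k => S.sup (fun φ => Nf k φ)) with hNs
      obtain ⟨i, hiN, k, hk1, hkw, hfik, hgik⟩ := hpigeon Nstar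
      have hle : Nf k (g i) ≤ Nstar := by
        have hmem : k ∈ Finset.range (w + 1) := Finset.mem_range.mpr (by omega)
        calc Nf k (g i) ≤ S.sup (fun φ => Nf k φ) :=
              Finset.le_sup (f := fun φ => Nf k φ) (hgS i)
          _ ≤ Nstar := Finset.le_sup (f := fun k => S.sup (fun φ => Nf k φ)) hmem
      exact hNf k (g i) hk1 (hgS i) i (le_trans hle hiN) ⟨rfl, hgik.symm, hfik⟩
    obtain ⟨k, hk1, φ, hφS, hrec⟩ := hfix
    have hφle : ‖φ (em lam)‖ ≤ 1 := (Finset.mem_filter.mp hφS).2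
    rcases lt_or_eq_of_le hφle with hlt | heq1
    · -- contracting place: contradicts α ≠ 0
      obtain ⟨αm, hαm, hαmin⟩ := X.exists_min_image (fun α => ‖φ (em α)‖) ⟨f 0, hfX 0⟩
      have hm0 : 0 < ‖φ (em αm)‖ := by
        rw [norm_pos_iff]
        intro h0
        rw [map_eq_zero] at h0
        exact (hX αm hαm).1 (RingOfIntegers.coe_eq_zero_iff.mp h0)
      set m0 : ℝ := ‖φ (em αm)‖ with hm0def
      obtain ⟨N₁, hN₁⟩ := hsmall (m0 / 4) (by linarith)
      have hφnn : (0 : ℝ) ≤ ‖φ (em lam)‖ := norm_nonneg _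
      obtain ⟨N₂, hN₂⟩ : ∃ N₂, ∀ i, N₂ ≤ i → ‖φ (em lam)‖ ^ i ≤ m0 / 4 := by
        obtain ⟨n0, hn0⟩ := exists_pow_lt_of_lt_one (by linarith : (0:ℝ) < m0 / 4) hlt
        exact ⟨n0, fun i hi => le_trans (pow_le_pow_of_le_one hφnn hlt.le hi) hn0.le⟩
      obtain ⟨i, hiN, hgi, -, -⟩ := hrec (max N₁ N₂)
      have h1 : ‖φ (em (u i))‖ ≤ m0 / 4 := by
        rw [← hgi]; exact hN₁ i (le_trans (le_max_left _ _) hiN)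
      have h2 : ‖φ (em lam)‖ ^ i ≤ m0 / 4 := hN₂ i (le_trans (le_max_right _ _) hiN)
      have h3 : m0 ≤ ‖φ (em (f i))‖ := hαmin (f i) (hfX i)
      have h4 : φ (em (f i)) = φ ((em lam) ^ i) - φ (em (u i)) := by
        rw [hcast i, map_sub]; ring
      have h5 : ‖φ (em (f i))‖ ≤ ‖φ (em lam)‖ ^ i + ‖φ (em (u i))‖ := by
        rw [h4]
        refine le_trans (norm_sub_le _ _) ?_
        rw [map_pow, norm_pow]
      linarith
    · -- unit-circle place: contradicts non-root-of-unity
      have hδ : ∀ δ : ℝ, 0 < δ → ‖(φ (em lam)) ^ k - 1‖ ≤ δ := by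
        intro δ hδ0
        obtain ⟨N₁, hN₁⟩ := hsmall (δ / 2) (by linarith)
        obtain ⟨i, hiN, hgi, hgik, hfik⟩ := hrec N₁
        have h1 : ‖φ (em (u i))‖ ≤ δ / 2 := by rw [← hgi]; exact hN₁ i hiN
        have h2 : ‖φ (em (u (i + k)))‖ ≤ δ / 2 := by
          rw [← hgik]; exact hN₁ (i + k) (le_trans hiN (Nat.le_add_right _ _))
        have h3 : φ (em (u (i + k))) - φ (em (u i)) =
            (φ (em lam)) ^ i * ((φ (em lam)) ^ k - 1) := by
          rw [hcast (i + k), hcast i, ← hfik, map_sub, map_sub, map_pow, map_pow]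
          ring
        have h4 : ‖(φ (em lam)) ^ i * ((φ (em lam)) ^ k - 1)‖ ≤ δ := by
          rw [← h3]
          calc ‖φ (em (u (i + k))) - φ (em (u i))‖
              ≤ ‖φ (em (u (i + k)))‖ + ‖φ (em (u i))‖ := norm_sub_le _ _
            _ ≤ δ := by linarith
        rw [norm_mul, norm_pow, heq1, one_pow, one_mul] at h4
        exact h4
      have h0 : (φ (em lam)) ^ k - 1 = 0 := by
        by_contra hne
        have hpos : 0 < ‖(φ (em lam)) ^ k - 1‖ := norm_pos_iff.mpr hne
        linarith [hδ (‖(φ (em lam)) ^ k - 1‖ / 2) (by linarith)]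
      have hlk : lam ^ k = 1 := by
        have h1 : φ (em (lam ^ k)) = φ 1 := by
          rw [map_pow, map_pow, map_one]
          rw [sub_eq_zero] at h0
          exact h0
        have h2 : em (lam ^ k) = 1 := φ.injective h1
        exact RingOfIntegers.coe_injective (by rw [map_one]; exact h2)
      exact hroot k hk1 hlk
end
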